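/- (Theorem 4.7) For every n ≥ 0, ∑_{k=0}^{n} s_{n,k} = p_{n+1}, where p is the Pell sequence; equivalently, the number of free symmetric Schröder paths of length 2n equals the Pell number p_{n+1}. -/

import Mathlib

/-- `s_{n,k} = ∑_{j=0}^{n-k} C(k+j,k) * C(j, n-j-k)` for `k ≤ n`, and `0` for `k > n`. -/
def snk (n k : ℕ) : ℕ :=
  if k ≤ n then
    ∑ j ∈ Finset.range (n - k + 1), Nat.choose (k + j) k * Nat.choose j (n - j - k)
  else 0

/-- The Pell numbers: `p_0 = 0`, `p_1 = 1`, `p_{n+2} = 2 p_{n+1} + p_n`. -/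
def pell : ℕ → ℕ
  | 0 => 0
  | 1 => 1
  | n + 2 => 2 * pell (n + 1) + pell n

open Finset

/-- swap identity: C(m,k)·C(m-k,h) = C(m,h)·C(m-h,k) -/
lemma choose_swap (m k h : ℕ) :
    m.choose k * (m - k).choose h = m.choose h * (m - h).choose k := by
  rcases le_or_gt (k + h) m with hm | hm
  · have h1 := Nat.choose_mul (n := m) (show k ≤ k + h by omega)
    have h2 := Nat.choose_mul (n := m) (show h ≤ k + h by omega)
    rw [Nat.add_sub_cancel_left] at h1
    rw [Nat.add_sub_cancel_right] at h2
    rw [← h1, ← h2, Nat.choose_symm_add]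
  · rcases le_or_gt k m with hk | hk
    · rcases le_or_gt h m with hh | hh
      · rw [Nat.choose_eq_zero_of_lt (show m - k < h by omega),
          Nat.choose_eq_zero_of_lt (show m - h < k by omega)]
        ring
      · rw [Nat.choose_eq_zero_of_lt hh]
        rw [Nat.choose_eq_zero_of_lt (show m - k < h by omega)]
        ring
    · rw [Nat.choose_eq_zero_of_lt hk,
        Nat.choose_eq_zero_of_lt (show m - h < k by omega)]
      ring

lemma sum_choose_eq (t N : ℕ) (ht : t ≤ N) :
    ∑ k ∈ range (N + 1), t.choose k = 2 ^ t := by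
  rw [← Nat.sum_range_choose t]
  symm
  apply Finset.sum_subset
  · intro x hx
    simp only [mem_range] at *
    omega
  · intro x _ hx
    simp only [mem_range] at hx
    exact Nat.choose_eq_zero_of_lt (by omega)

lemma double_sum_reindex (f : ℕ → ℕ → ℕ) (n : ℕ) :
    ∑ k ∈ range (n + 1), ∑ j ∈ range (n - k + 1), f k j
      = ∑ m ∈ range (n + 1), ∑ k ∈ range (m + 1), f k (m - k) := by
  induction n with
  | zero => simp
  | succ n ih =>
    rw [Finset.sum_range_succ (fun k => ∑ j ∈ range (n + 1 - k + 1), f k j),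
      Finset.sum_range_succ (fun m => ∑ k ∈ range (m + 1), f k (m - k))]
    have h1 : ∀ k ∈ range (n + 1),
        ∑ j ∈ range (n + 1 - k + 1), f k j
          = (∑ j ∈ range (n - k + 1), f k j) + f k (n + 1 - k) := by
      intro k hk
      simp only [mem_range] at hk
      have e : n + 1 - k + 1 = (n - k + 1) + 1 := by omega
      have e2 : n - k + 1 = n + 1 - k := by omega
      rw [e, Finset.sum_range_succ, e2]
    rw [Finset.sum_congr rfl h1, Finset.sum_add_distrib, ih,
      Finset.sum_range_succ (fun k => f k (n + 1 - k)) (n + 1)]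
    simp only [Nat.sub_self, Nat.zero_add, Finset.sum_range_one]
    ring

/-- the diagonal Pell sum -/
def g (n : ℕ) : ℕ := ∑ h ∈ range (n + 1), (n - h).choose h * 2 ^ (n - h - h)

lemma key_term (n h : ℕ) :
    (n + 1 - h).choose (h + 1) * 2 ^ (n + 1 - h - (h + 1))
      = 2 * ((n - h).choose (h + 1) * 2 ^ (n - h - (h + 1)))
        + (n - h).choose h * 2 ^ (n - h - h) := by
  rcases le_or_gt h n with hh | hh
  · have e1 : n + 1 - h = (n - h) + 1 := by omega
    rw [e1, Nat.choose_succ_succ']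
    rcases le_or_gt (2 * h + 1) n with h2 | h2
    · have e2 : n - h + 1 - (h + 1) = (n - h - (h + 1)) + 1 := by omega
      have e3 : n - h - h = (n - h - (h + 1)) + 1 := by omega
      rw [e2, e3, pow_succ]
      ring
    · rw [Nat.choose_eq_zero_of_lt (show n - h < h + 1 by omega)]
      have e4 : n - h + 1 - (h + 1) = n - h - h := by omega
      rw [e4]
      ring
  · rw [Nat.choose_eq_zero_of_lt (show n + 1 - h < h + 1 by omega),
      Nat.choose_eq_zero_of_lt (show n - h < h + 1 by omega),
      Nat.choose_eq_zero_of_lt (show n - h < h by omega)]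
    ring

lemma g_rec (n : ℕ) : g (n + 2) = 2 * g (n + 1) + g n := by
  have hg2 : g (n + 2)
      = (∑ h ∈ range (n + 2), (n + 2 - (h + 1)).choose (h + 1)
          * 2 ^ (n + 2 - (h + 1) - (h + 1))) + 2 ^ (n + 2) := by
    rw [g, Finset.sum_range_succ']
    simp
  have harg : ∀ h : ℕ, n + 2 - (h + 1) = n + 1 - h := by omega
  have harg2 : ∀ h : ℕ, n + 1 - (h + 1) = n - h := by omega
  rw [hg2]
  calc (∑ h ∈ range (n + 2), (n + 2 - (h + 1)).choose (h + 1)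
          * 2 ^ (n + 2 - (h + 1) - (h + 1))) + 2 ^ (n + 2)
      = (∑ h ∈ range (n + 2),
          (2 * ((n - h).choose (h + 1) * 2 ^ (n - h - (h + 1)))
            + (n - h).choose h * 2 ^ (n - h - h))) + 2 ^ (n + 2) := by
        congr 1
        apply Finset.sum_congr rfl
        intro h _
        rw [harg h, key_term n h]
    _ = 2 * (∑ h ∈ range (n + 2), (n - h).choose (h + 1) * 2 ^ (n - h - (h + 1)))
          + (∑ h ∈ range (n + 2), (n - h).choose h * 2 ^ (n - h - h)) + 2 ^ (n + 2) := by
        rw [Finset.sum_add_distrib, Finset.mul_sum]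
    _ = 2 * g (n + 1) + g n := by
        have hA : ∑ h ∈ range (n + 2), (n - h).choose (h + 1) * 2 ^ (n - h - (h + 1))
            = ∑ h ∈ range (n + 1), (n - h).choose (h + 1) * 2 ^ (n - h - (h + 1)) := by
          rw [Finset.sum_range_succ]
          rw [Nat.choose_eq_zero_of_lt (show n - (n + 1) < n + 1 + 1 by omega)]
          simp
        have hB : ∑ h ∈ range (n + 2), (n - h).choose h * 2 ^ (n - h - h)
            = g n + (n - (n + 1)).choose (n + 1) * 2 ^ (n - (n + 1) - (n + 1)) := by
          rw [Finset.sum_range_succ, g]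
        have hC : g (n + 1) = (∑ h ∈ range (n + 1),
            (n - h).choose (h + 1) * 2 ^ (n - h - (h + 1))) + 2 ^ (n + 1) := by
          rw [g, Finset.sum_range_succ']
          simp only [Nat.sub_zero, Nat.choose_zero_right, one_mul]
          congr 1
          apply Finset.sum_congr rfl
          intro h _
          rw [harg2 h]
        rw [hA, hB, hC, Nat.choose_eq_zero_of_lt (show n - (n + 1) < n + 1 by omega)]
        ring

lemma g_eq_pell (n : ℕ) : g n = pell (n + 1) := by
  induction n using Nat.strong_induction_on with
  | _ n ih =>
    match n with
    | 0 => simp [g, pell]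
    | 1 =>
      show g 1 = pell 2
      rw [show pell 2 = 2 * pell 1 + pell 0 from rfl]
      decide
    | (n + 2) =>
      rw [g_rec, ih (n + 1) (by omega), ih n (by omega)]
      rfl

/-- **Theorem 4.7.** `∑_{k=0}^n s_{n,k} = p_{n+1}`, the `(n+1)`-st Pell number. -/
theorem sum_snk_eq_pell (n : ℕ) :
    ∑ k ∈ Finset.range (n + 1), snk n k = pell (n + 1) := by
  have h1 : ∑ k ∈ range (n + 1), snk n k
      = ∑ k ∈ range (n + 1), ∑ j ∈ range (n - k + 1),
          (k + j).choose k * j.choose (n - j - k) := by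
    apply Finset.sum_congr rfl
    intro k hk
    simp only [mem_range] at hk
    rw [snk, if_pos (by omega)]
  rw [h1, double_sum_reindex (fun k j => (k + j).choose k * j.choose (n - j - k)) n]
  have h2 : ∀ m ∈ range (n + 1),
      ∑ k ∈ range (m + 1), (k + (m - k)).choose k * (m - k).choose (n - (m - k) - k)
        = m.choose (n - m) * 2 ^ (m - (n - m)) := by
    intro m hm
    simp only [mem_range] at hm
    have ht : ∀ k ∈ range (m + 1),
        (k + (m - k)).choose k * (m - k).choose (n - (m - k) - k)
          = m.choose (n - m) * (m - (n - m)).choose k := by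
      intro k hk
      simp only [mem_range] at hk
      have e1 : k + (m - k) = m := by omega
      have e2 : n - (m - k) - k = n - m := by omega
      rw [e1, e2, choose_swap]
    rw [Finset.sum_congr rfl ht, ← Finset.mul_sum,
      sum_choose_eq (m - (n - m)) m (by omega)]
  rw [Finset.sum_congr rfl h2,
    ← Finset.sum_range_reflect (fun m => m.choose (n - m) * 2 ^ (m - (n - m))) (n + 1)]
  have h3 : ∀ h ∈ range (n + 1),
      (n + 1 - 1 - h).choose (n - (n + 1 - 1 - h)) * 2 ^ (n + 1 - 1 - h - (n - (n + 1 - 1 - h)))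
        = (n - h).choose h * 2 ^ (n - h - h) := by
    intro h hh
    simp only [mem_range] at hh
    have e1 : n + 1 - 1 - h = n - h := by omega
    have e2 : n - (n - h) = h := by omega
    rw [e1, e2]
  rw [Finset.sum_congr rfl h3]
  exact g_eq_pell n
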